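/- Let Q be a collection of dyadic cubes in Q0 = [0,1]^d with pairwise disjoint interiors, let η > 0, and let Λ be an odd natural number. Then Q can be partitioned into families Q_1, …, Q_{k0} and B such that: (i) every cube of Q is in exactly one of the Q_k or B; (ii) if Q, Q' are distinct cubes in the same family Q_k, then ΛQ ∩ ΛQ' = ∅; and (iii) the H^d-measure of the union of all cubes in B is less than η. The number of families k0 depends only on η, Λ, and d. -/

import Mathlib

open Metric Set MeasureTheory ENNReal

noncomputable section

/-- The `k`-dimensional Hausdorff content of a set in a metric space, defined via
countable covers by closed balls. -/
def hContent {X : Type*} [MetricSpace X] (k : ℕ) (S : Set X) : ℝ≥0∞ :=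
  ⨅ (B : ℕ → Set X) (_ : S ⊆ ⋃ i, B i) (_ : ∀ i, ∃ x r, B i = Metric.closedBall x r),
    ∑' i, EMetric.diam (B i) ^ k

/-- The `k`-dimensional Hausdorff measure of a set in a metric space, defined via
countable covers by closed balls of diameter at most `δ`, letting `δ → 0`. -/
def hMeasure {X : Type*} [MetricSpace X] (k : ℕ) (S : Set X) : ℝ≥0∞ :=
  ⨆ (δ : ℝ≥0∞) (_ : 0 < δ),
    ⨅ (B : ℕ → Set X) (_ : S ⊆ ⋃ i, B i)
      (_ : ∀ i, (∃ x r, B i = Metric.closedBall x r) ∧ EMetric.diam (B i) ≤ δ),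
      ∑' i, EMetric.diam (B i) ^ k

/-- The closed unit cube `[0,1]^d` in `ℝ^d`. -/
def unitCube (d : ℕ) : Set (EuclideanSpace ℝ (Fin d)) :=
  {p | ∀ i, p i ∈ Set.Icc (0 : ℝ) 1}

/-- A dyadic subcube of `[0,1]^d`: it has side length `2⁻ᵏ` and lower-left corner `z/2ᵏ`. -/
structure DyadicCube (d : ℕ) : Type where
  k : ℕ
  z : Fin d → ℕ
  hz : ∀ i, z i + 1 ≤ 2 ^ k

namespace DyadicCube

/-- The side length of a dyadic cube. -/
def side {d : ℕ} (Q : DyadicCube d) : ℝ := (2 : ℝ)⁻¹ ^ Q.k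

/-- The center of a dyadic cube. -/
def center {d : ℕ} (Q : DyadicCube d) (i : Fin d) : ℝ :=
  ((Q.z i : ℝ) + 1 / 2) * (2 : ℝ)⁻¹ ^ Q.k

/-- The dyadic cube as a (closed) subset of `ℝ^d`. -/
def toSet {d : ℕ} (Q : DyadicCube d) : Set (EuclideanSpace ℝ (Fin d)) :=
  {p | ∀ i, |p i - Q.center i| ≤ Q.side / 2}

/-- `Q.scaled λ` is the cube `λQ`, with the same center as `Q` and `λ` times the side length. -/
def scaled {d : ℕ} (Q : DyadicCube d) (lam : ℝ) : Set (EuclideanSpace ℝ (Fin d)) :=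
  {p | ∀ i, |p i - Q.center i| ≤ lam * Q.side / 2}

end DyadicCube

/-- The `(n,m)`-mapping content `H^{n,m}_∞(f, A)`: the infimum of
`∑ H^n_∞(f(Q_i)) side(Q_i)^m` over countable covers of `A` by dyadic cubes of `[0,1]^{n+m}`
with pairwise disjoint interiors. -/
def mContent (n m : ℕ) {X : Type*} [MetricSpace X]
    (f : EuclideanSpace ℝ (Fin (n + m)) → X)
    (A : Set (EuclideanSpace ℝ (Fin (n + m)))) : ℝ≥0∞ :=
  ⨅ (S : Set (DyadicCube (n + m))) (_ : A ⊆ ⋃ Q ∈ S, Q.toSet)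
    (_ : S.Pairwise fun Q Q' => interior Q.toSet ∩ interior Q'.toSet = ∅),
    ∑' Q : S, hContent n (f '' Q.1.toSet) * ENNReal.ofReal (Q.1.side ^ m)

/-- The alternative `(n,m)`-mapping content `Ĥ^{n,m}_∞(f, A)`: the infimum of
`∑ H^n_∞(f(S_i)) diam(S_i)^m` over countable covers of `A` by arbitrary subsets of
`[0,1]^{n+m}`. -/
def altMContent (n m : ℕ) {X : Type*} [MetricSpace X]
    (f : EuclideanSpace ℝ (Fin (n + m)) → X)
    (A : Set (EuclideanSpace ℝ (Fin (n + m)))) : ℝ≥0∞ :=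
  ⨅ (S : ℕ → Set (EuclideanSpace ℝ (Fin (n + m)))) (_ : A ⊆ ⋃ i, S i)
    (_ : ∀ i, S i ⊆ unitCube (n + m)),
    ∑' i, hContent n (f '' S i) * EMetric.diam (S i) ^ m

/-- The first `n` coordinates of a point of `ℝ^{n+m} = ℝ^n × ℝ^m`. -/
def xpart (n m : ℕ) (p : EuclideanSpace ℝ (Fin (n + m))) : EuclideanSpace ℝ (Fin n) :=
  WithLp.toLp 2 (fun i => p (Fin.castAdd m i))

/-- The last `m` coordinates of a point of `ℝ^{n+m} = ℝ^n × ℝ^m`. -/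
def ypart (n m : ℕ) (p : EuclideanSpace ℝ (Fin (n + m))) : EuclideanSpace ℝ (Fin m) :=
  WithLp.toLp 2 (fun j => p (Fin.natAdd n j))

/-- The point `(x, y) ∈ ℝ^{n+m}` built from `x ∈ ℝ^n`, `y ∈ ℝ^m`. -/
def pairup (n m : ℕ) (x : EuclideanSpace ℝ (Fin n)) (y : EuclideanSpace ℝ (Fin m)) :
    EuclideanSpace ℝ (Fin (n + m)) :=
  WithLp.toLp 2 (fun i => (Fin.addCases (fun i₁ => x i₁) (fun j => y j) i : ℝ))

/-- The horizontal slice `E_y = E ∩ (ℝ^n × {y})`. -/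
def cubeSlice (n m : ℕ) (E : Set (EuclideanSpace ℝ (Fin (n + m))))
    (y : EuclideanSpace ℝ (Fin m)) : Set (EuclideanSpace ℝ (Fin (n + m))) :=
  {p ∈ E | ypart n m p = y}

/-- `f` is `C`-bi-Lipschitz on `s`. -/
def BiLipschitzOnWith {α β : Type*} [PseudoMetricSpace α] [PseudoMetricSpace β]
    (C : ℝ) (f : α → β) (s : Set α) : Prop :=
  ∀ x ∈ s, ∀ y ∈ s, C⁻¹ * dist x y ≤ dist (f x) (f y) ∧ dist (f x) (f y) ≤ C * dist x y

/-- `(E, g)` is a Hard Sard pair for `f` with constant `C`: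
(i) `g` is a globally `C`-bi-Lipschitz homeomorphism of `ℝ^{n+m}` (in particular it restricts
to a bi-Lipschitz map on `E`);
(ii) writing `F = f ∘ g⁻¹`, for `(x,y), (x',y') ∈ g(E)` one has `F(x,y) = F(x',y')` iff `x = x'`;
(iii) the map `(x,y) ↦ (F(x,y), y)` is `C`-bi-Lipschitz on `g(E)`, where `X × ℝ^m` carries the
max metric.  Conditions (ii) and (iii) are expressed at points `p = g⁻¹(x,y)`, `q = g⁻¹(x',y')`
of `E`. -/
def IsHardSardPairWith (n m : ℕ) {X : Type*} [MetricSpace X]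
    (f : EuclideanSpace ℝ (Fin (n + m)) → X)
    (E : Set (EuclideanSpace ℝ (Fin (n + m))))
    (g : EuclideanSpace ℝ (Fin (n + m)) → EuclideanSpace ℝ (Fin (n + m)))
    (C : ℝ) : Prop :=
  Function.Surjective g ∧
  BiLipschitzOnWith C g Set.univ ∧
  (∀ p ∈ E, ∀ q ∈ E, (f p = f q ↔ xpart n m (g p) = xpart n m (g q))) ∧
  (∀ p ∈ E, ∀ q ∈ E,
    C⁻¹ * dist (g p) (g q) ≤ dist (f p, ypart n m (g p)) (f q, ypart n m (g q)) ∧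
    dist (f p, ypart n m (g p)) (f q, ypart n m (g q)) ≤ C * dist (g p) (g q))

/-- `E` is a Hard Sard set for `f` with constant `C`. -/
def IsHardSardSetWith (n m : ℕ) {X : Type*} [MetricSpace X]
    (f : EuclideanSpace ℝ (Fin (n + m)) → X)
    (E : Set (EuclideanSpace ℝ (Fin (n + m)))) (C : ℝ) : Prop :=
  ∃ g, IsHardSardPairWith n m f E g C

/-- `sup_{x,y ∈ s} | d(f(x), f(y)) - N(x - y) |`. -/
def mdSup {d : ℕ} {X : Type*} [MetricSpace X] (f : EuclideanSpace ℝ (Fin d) → X)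
    (s : Set (EuclideanSpace ℝ (Fin d))) (N : Seminorm ℝ (EuclideanSpace ℝ (Fin d))) : ℝ :=
  ⨆ x : s, ⨆ y : s, |dist (f x.1) (f y.1) - N (x.1 - y.1)|

/-- `md_f` on a set `s` (a cube of side length `side`):
`side⁻¹ · inf_N sup_{x,y ∈ s} | d(f(x), f(y)) - N(x-y) |`, the infimum being over all
seminorms `N` on `ℝ^d`. -/
def mdf {d : ℕ} {X : Type*} [MetricSpace X] (f : EuclideanSpace ℝ (Fin d) → X)
    (s : Set (EuclideanSpace ℝ (Fin d))) (side : ℝ) : ℝ :=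
  side⁻¹ * ⨅ N : Seminorm ℝ (EuclideanSpace ℝ (Fin d)), mdSup f s N

/-- The coordinate plane spanned by the standard basis vectors `e_i`, `i ∈ s`. -/
def coordPlane {d : ℕ} (s : Finset (Fin d)) : Submodule ℝ (EuclideanSpace ℝ (Fin d)) :=
  Submodule.span ℝ {v | ∃ i ∈ s, v = EuclideanSpace.single i (1 : ℝ)}


namespace SplitAux


variable {d : ℕ}

abbrev Xd (d : ℕ) := EuclideanSpace ℝ (Fin d)

lemma measurableEquiv_apply (p : Xd d) (i : Fin d) :
    ((MeasurableEquiv.toLp 2 (Fin d → ℝ)).symm) p i = p i := rfl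

def closedBox (c : Fin d → ℝ) (r : ℝ) : Set (Xd d) := {p | ∀ i, |p i - c i| ≤ r}
def openBox (c : Fin d → ℝ) (r : ℝ) : Set (Xd d) := {p | ∀ i, |p i - c i| < r}

lemma closedBox_eq (c : Fin d → ℝ) (r : ℝ) :
    closedBox c r = ((MeasurableEquiv.toLp 2 (Fin d → ℝ)).symm) ⁻¹'
      (Set.univ.pi fun i => Icc (c i - r) (c i + r)) := by
  ext p
  simp only [closedBox, mem_setOf_eq, mem_preimage, Set.mem_pi, mem_univ, forall_true_left,
    mem_Icc, measurableEquiv_apply, abs_le]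
  constructor
  · intro h i; have := h i; constructor <;> linarith [(h i).1, (h i).2]
  · intro h i; constructor <;> linarith [(h i).1, (h i).2]

lemma openBox_eq (c : Fin d → ℝ) (r : ℝ) :
    openBox c r = ((MeasurableEquiv.toLp 2 (Fin d → ℝ)).symm) ⁻¹'
      (Set.univ.pi fun i => Ioo (c i - r) (c i + r)) := by
  ext p
  simp only [openBox, mem_setOf_eq, mem_preimage, Set.mem_pi, mem_univ, forall_true_left,
    mem_Ioo, measurableEquiv_apply, abs_lt]
  constructor
  · intro h i; constructor <;> linarith [(h i).1, (h i).2]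
  · intro h i; constructor <;> linarith [(h i).1, (h i).2]

lemma measurableSet_closedBox (c : Fin d → ℝ) (r : ℝ) : MeasurableSet (closedBox c r) := by
  rw [closedBox_eq]
  exact (MeasurableSet.univ_pi fun i => measurableSet_Icc).preimage
    ((MeasurableEquiv.toLp 2 (Fin d → ℝ)).symm).measurable

lemma measurableSet_openBox (c : Fin d → ℝ) (r : ℝ) : MeasurableSet (openBox c r) := by
  rw [openBox_eq]
  exact (MeasurableSet.univ_pi fun i => measurableSet_Ioo).preimage
    ((MeasurableEquiv.toLp 2 (Fin d → ℝ)).symm).measurable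

lemma volume_closedBox (c : Fin d → ℝ) {r : ℝ} (hr : 0 ≤ r) :
    volume (closedBox c r) = ENNReal.ofReal ((2*r)^d) := by
  rw [closedBox_eq,
    (EuclideanSpace.volume_preserving_symm_measurableEquiv_toLp (Fin d)).measure_preimage
      ((MeasurableSet.univ_pi fun i => measurableSet_Icc).nullMeasurableSet),
    volume_pi_pi]
  simp only [Real.volume_Icc]
  have : ∀ i : Fin d, ENNReal.ofReal (c i + r - (c i - r)) = ENNReal.ofReal (2*r) := by
    intro i; ring_nf
  rw [Finset.prod_congr rfl (fun i _ => this i), Finset.prod_const, Finset.card_univ,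
    Fintype.card_fin, ← ENNReal.ofReal_pow (by linarith)]

lemma volume_openBox (c : Fin d → ℝ) {r : ℝ} (hr : 0 ≤ r) :
    volume (openBox c r) = ENNReal.ofReal ((2*r)^d) := by
  rw [openBox_eq,
    (EuclideanSpace.volume_preserving_symm_measurableEquiv_toLp (Fin d)).measure_preimage
      ((MeasurableSet.univ_pi fun i => measurableSet_Ioo).nullMeasurableSet),
    volume_pi_pi]
  simp only [Real.volume_Ioo]
  have : ∀ i : Fin d, ENNReal.ofReal (c i + r - (c i - r)) = ENNReal.ofReal (2*r) := by
    intro i; ring_nf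
  rw [Finset.prod_congr rfl (fun i _ => this i), Finset.prod_const, Finset.card_univ,
    Fintype.card_fin, ← ENNReal.ofReal_pow (by linarith)]

lemma isOpen_openBox (c : Fin d → ℝ) (r : ℝ) : IsOpen (openBox c r) := by
  have : openBox c r = ⋂ i, {p : Xd d | |p i - c i| < r} := by
    ext p; simp [openBox]
  rw [this]
  exact isOpen_iInter_of_finite fun i => by
    have hc : Continuous fun p : Xd d => |p i - c i| := by
      have h1 : Continuous fun p : Xd d => p i := (EuclideanSpace.proj i).continuous
      continuity
    exact isOpen_lt hc continuous_const


end SplitAux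
namespace SplitAux

variable {d : ℕ}

instance : Countable (DyadicCube d) := by
  have hinj : Function.Injective (fun Q : DyadicCube d => (Q.k, Q.z)) := by
    intro Q Q' h
    cases Q; cases Q'
    simp only [Prod.mk.injEq] at h
    simp [h.1, h.2]
  exact hinj.countable

lemma cube_ext {Q Q' : DyadicCube d} (hk : Q.k = Q'.k) (hz : Q.z = Q'.z) : Q = Q' := by
  cases Q; cases Q'; simp_all

lemma side_pos (Q : DyadicCube d) : 0 < Q.side := by
  simp only [DyadicCube.side]; positivity

lemma toSet_eq (Q : DyadicCube d) : Q.toSet = closedBox Q.center (Q.side/2) := rfl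

lemma scaled_eq (Q : DyadicCube d) (L : ℝ) : Q.scaled L = closedBox Q.center (L*Q.side/2) := rfl

def oBox (Q : DyadicCube d) : Set (Xd d) := openBox Q.center (Q.side/2)

lemma oBox_subset_toSet (Q : DyadicCube d) : oBox Q ⊆ Q.toSet :=
  fun p hp i => le_of_lt (hp i)

lemma coord_bounds (Q : DyadicCube d) {p : Xd d} (hp : p ∈ Q.toSet) (i : Fin d) :
    (Q.z i : ℝ) * Q.side ≤ p i ∧ p i ≤ ((Q.z i : ℝ) + 1) * Q.side := by
  have h := abs_le.1 (hp i)
  have hc : Q.center i = ((Q.z i : ℝ) + 1/2) * Q.side := rfl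
  rw [hc] at h
  constructor <;> nlinarith [h.1, h.2]

lemma zside_le_one (Q : DyadicCube d) (i : Fin d) : ((Q.z i : ℝ) + 1) * Q.side ≤ 1 := by
  have hz : ((Q.z i : ℝ) + 1) ≤ 2 ^ Q.k := by exact_mod_cast Q.hz i
  have hside : Q.side = ((2:ℝ) ^ Q.k)⁻¹ := by simp [DyadicCube.side, inv_pow]
  rw [hside, ← div_eq_mul_inv, div_le_one (by positivity)]
  exact hz

lemma toSet_subset_unit (Q : DyadicCube d) :
    Q.toSet ⊆ closedBox (fun _ => (1:ℝ)/2) (1/2) := by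
  intro p hp i
  obtain ⟨h1, h2⟩ := coord_bounds Q hp i
  have h0 : 0 ≤ (Q.z i : ℝ) * Q.side := by
    have := side_pos Q; positivity
  have h3 := zside_le_one Q i
  rw [abs_le]; constructor <;> linarith

lemma side_le_half {Q Q' : DyadicCube d} (h : Q'.k < Q.k) : Q.side ≤ Q'.side / 2 := by
  have : Q.side ≤ (2:ℝ)⁻¹ ^ (Q'.k + 1) := by
    apply pow_le_pow_of_le_one (by norm_num) (by norm_num) h
  calc Q.side ≤ (2:ℝ)⁻¹ ^ (Q'.k + 1) := this
    _ = Q'.side / 2 := by rw [pow_succ]; simp [DyadicCube.side]; ring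

/-! ### Geometry of conflicts -/

def Conf (Λ : ℕ) (Q Q' : DyadicCube d) : Prop :=
  ((Q.scaled Λ) ∩ (Q'.scaled Λ)).Nonempty

lemma conf_center {Λ : ℕ} {Q Q' : DyadicCube d} (h : Conf Λ Q Q') (i : Fin d) :
    |Q.center i - Q'.center i| ≤ (Λ:ℝ) * (Q.side + Q'.side) / 2 := by
  obtain ⟨p, hp, hp'⟩ := h
  have h1 := hp i
  have h2 := hp' i
  calc |Q.center i - Q'.center i| ≤ |p i - Q.center i| + |p i - Q'.center i| := by
        rw [abs_sub_comm (p i) (Q.center i)] at *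
        calc |Q.center i - Q'.center i| = |(Q.center i - p i) + (p i - Q'.center i)| := by ring_nf
          _ ≤ _ := abs_add_le _ _
    _ ≤ (Λ:ℝ) * Q.side / 2 + (Λ:ℝ) * Q'.side / 2 := add_le_add h1 h2
    _ = (Λ:ℝ) * (Q.side + Q'.side) / 2 := by ring

lemma conf_subset {Λ : ℕ} {Q Q' : DyadicCube d} (hk : Q'.k < Q.k) (h : Conf Λ Q Q') :
    Q.toSet ⊆ Q'.scaled (2*Λ+1 : ℕ) := by
  intro p hp i
  have h1 := hp i
  have h2 := conf_center h i
  have h3 := side_le_half hk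
  have hs := side_pos Q
  have hs' := side_pos Q'
  have hΛ : (0:ℝ) ≤ Λ := Nat.cast_nonneg Λ
  have hcast : ((2*Λ+1 : ℕ) : ℝ) = 2*(Λ:ℝ)+1 := by push_cast; ring
  rw [hcast]
  have : |p i - Q'.center i| ≤ |p i - Q.center i| + |Q.center i - Q'.center i| := by
    calc |p i - Q'.center i| = |(p i - Q.center i) + (Q.center i - Q'.center i)| := by ring_nf
      _ ≤ _ := abs_add_le _ _
  have hb : |p i - Q'.center i| ≤ Q.side/2 + (Λ:ℝ)*(Q.side + Q'.side)/2 := by linarith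
  nlinarith [hb]

/-- Same-scale cubes with the same residues mod `Λ+1` do not conflict. -/
lemma same_scale_not_conf {Λ : ℕ} {Q Q' : DyadicCube d} (hk : Q.k = Q'.k)
    (hne : Q ≠ Q')
    (hA : ∀ i, Q.z i % (Λ+1) = Q'.z i % (Λ+1)) : ¬ Conf Λ Q Q' := by
  intro hconf
  have hz : Q.z ≠ Q'.z := fun h => hne (cube_ext hk h)
  obtain ⟨i, hi⟩ := Function.ne_iff.1 hz
  -- |z i - z' i| ≥ Λ + 1 over ℤ
  have hdvd : ((Λ:ℤ)+1) ∣ ((Q.z i : ℤ) - (Q'.z i : ℤ)) := by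
    have : ((Q.z i : ℤ)) % ((Λ:ℤ)+1) = ((Q'.z i : ℤ)) % ((Λ:ℤ)+1) := by
      have := hA i
      have h1 : ((Q.z i % (Λ+1) : ℕ) : ℤ) = ((Q'.z i % (Λ+1) : ℕ) : ℤ) := by exact_mod_cast this
      push_cast at h1
      exact h1
    exact Int.ModEq.dvd (Int.ModEq.symm this)
  have hne' : ((Q.z i : ℤ) - (Q'.z i : ℤ)) ≠ 0 := by
    intro h; apply hi; omega
  have habs : ((Λ:ℤ)+1) ≤ |(Q.z i : ℤ) - (Q'.z i : ℤ)| := by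
    apply Int.le_of_dvd (abs_pos.mpr hne') ((dvd_abs _ _).mpr hdvd)
  -- centers
  have hcc := conf_center hconf i
  have hcQ : Q.center i = ((Q.z i : ℝ) + 1/2) * Q.side := rfl
  have hcQ' : Q'.center i = ((Q'.z i : ℝ) + 1/2) * Q'.side := rfl
  have hsideeq : Q.side = Q'.side := by simp [DyadicCube.side, hk]
  have hs := side_pos Q
  have hcdiff : |Q.center i - Q'.center i| = |(Q.z i : ℝ) - (Q'.z i : ℝ)| * Q.side := by
    have heq : Q.center i - Q'.center i = ((Q.z i : ℝ) - (Q'.z i : ℝ)) * Q.side := by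
      rw [hcQ, hcQ', ← hsideeq]; ring
    rw [heq, abs_mul, abs_of_pos hs]
  have hzr : ((Λ:ℝ)+1) ≤ |(Q.z i : ℝ) - (Q'.z i : ℝ)| := by
    have := habs
    have hcast : |(Q.z i : ℝ) - (Q'.z i : ℝ)| = ((|(Q.z i : ℤ) - (Q'.z i : ℤ)| : ℤ) : ℝ) := by
      push_cast; rfl
    rw [hcast]
    exact_mod_cast this
  rw [hcdiff, ← hsideeq] at hcc
  nlinarith [hcc, hzr, hs]

end SplitAux
namespace SplitAux

/-! ### Greedy coloring -/

variable {d : ℕ}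

def resid (Λ : ℕ) (Q : DyadicCube d) : Fin d → Fin (Λ+1) :=
  fun i => ⟨Q.z i % (Λ+1), Nat.mod_lt _ (Nat.succ_pos Λ)⟩

open Classical in
def pick (𝒬 : Set (DyadicCube d)) (Λ m : ℕ) (Q : DyadicCube d)
    (prev : DyadicCube d → Option (Fin m)) : Option (Fin m) :=
  if h : ∃ c : Fin m, ∀ Q' ∈ 𝒬, Q'.k < Q.k → resid Λ Q' = resid Λ Q → Conf Λ Q Q' →
      prev Q' ≠ some c
  then some h.choose else none

def colAux (𝒬 : Set (DyadicCube d)) (Λ m : ℕ) : ℕ → DyadicCube d → Option (Fin m)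
  | 0, _ => none
  | (n+1), Q => if Q.k = n then pick 𝒬 Λ m Q (colAux 𝒬 Λ m n) else colAux 𝒬 Λ m n Q

def bcolor (𝒬 : Set (DyadicCube d)) (Λ m : ℕ) (Q : DyadicCube d) : Option (Fin m) :=
  colAux 𝒬 Λ m (Q.k+1) Q

variable {𝒬 : Set (DyadicCube d)} {Λ m : ℕ}

lemma colAux_stab : ∀ n (Q : DyadicCube d), Q.k < n → colAux 𝒬 Λ m n Q = bcolor 𝒬 Λ m Q := by
  intro n
  induction n with
  | zero => intro Q h; omega
  | succ n ih =>
    intro Q h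
    by_cases hk : Q.k = n
    · subst hk
      rfl
    · have hlt : Q.k < n := by omega
      rw [show colAux 𝒬 Λ m (n+1) Q = colAux 𝒬 Λ m n Q from by simp [colAux, hk], ih Q hlt]

lemma bcolor_eq_pick (Q : DyadicCube d) :
    bcolor 𝒬 Λ m Q = pick 𝒬 Λ m Q (colAux 𝒬 Λ m Q.k) := by
  simp [bcolor, colAux]

lemma bcolor_some {Q : DyadicCube d} {c : Fin m} (h : bcolor 𝒬 Λ m Q = some c) :
    ∀ Q' ∈ 𝒬, Q'.k < Q.k → resid Λ Q' = resid Λ Q → Conf Λ Q Q' →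
      bcolor 𝒬 Λ m Q' ≠ some c := by
  rw [bcolor_eq_pick, pick] at h
  split at h
  · rename_i hex
    intro Q' hQ' hk hA hconf
    rw [← colAux_stab Q.k Q' hk]
    have hcc : hex.choose = c := Option.some.inj h
    rw [← hcc]
    exact hex.choose_spec Q' hQ' hk hA hconf
  · exact absurd h (by simp)

lemma bcolor_none {Q : DyadicCube d} (h : bcolor 𝒬 Λ m Q = none) (c : Fin m) :
    ∃ Q' ∈ 𝒬, Q'.k < Q.k ∧ resid Λ Q' = resid Λ Q ∧ Conf Λ Q Q' ∧
      bcolor 𝒬 Λ m Q' = some c := by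
  rw [bcolor_eq_pick, pick] at h
  split at h
  · exact absurd h (by simp)
  · rename_i hex
    push_neg at hex
    obtain ⟨Q', hQ', hk, hA, hconf, hc⟩ := hex c
    refine ⟨Q', hQ', hk, hA, hconf, ?_⟩
    rw [← colAux_stab Q.k Q' hk, hc]

end SplitAux
namespace SplitAux

variable {d : ℕ}

lemma exists_nat_cover {Y : Type*} [MetricSpace Y] [Nonempty Y] {ι : Type*} [Countable ι]
    (C : ι → Set Y) (k : ℕ) (hk : 1 ≤ k) :
    ∃ B : ℕ → Set Y, (⋃ i, C i) ⊆ (⋃ n, B n) ∧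
      (∀ n, B n = ∅ ∨ ∃ i, B n = C i) ∧
      ∑' n, EMetric.diam (B n) ^ k ≤ ∑' i, EMetric.diam (C i) ^ k := by
  classical
  obtain ⟨f, hf⟩ := exists_injective_nat ι
  set B : ℕ → Set Y := fun n => if h : ∃ i, f i = n then C h.choose else ∅ with hBdef
  have hBf : ∀ i, B (f i) = C i := by
    intro i
    have h0 : B (f i) = if h : ∃ j, f j = f i then C h.choose else ∅ := rfl
    rw [h0, dif_pos ⟨i, rfl⟩]
    exact congrArg C (hf (⟨i, rfl⟩ : ∃ j, f j = f i).choose_spec)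
  have hBnot : ∀ n, (¬ ∃ i, f i = n) → B n = ∅ := by
    intro n h
    have h0 : B n = if h : ∃ j, f j = n then C h.choose else ∅ := rfl
    rw [h0, dif_neg h]
  refine ⟨B, ?_, ?_, ?_⟩
  · intro x hx
    obtain ⟨i, hi⟩ := mem_iUnion.1 hx
    exact mem_iUnion.2 ⟨f i, (hBf i).symm ▸ hi⟩
  · intro n
    by_cases h : ∃ i, f i = n
    · right
      refine ⟨h.choose, ?_⟩
      obtain ⟨i, hi⟩ := h
      have h0 : B n = if h : ∃ j, f j = n then C h.choose else ∅ := rfl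
      rw [h0, dif_pos ⟨i, hi⟩]
    · left; exact hBnot n h
  · have key := Function.Injective.tsum_eq (g := f) hf
      (f := fun n => EMetric.diam (B n) ^ k) ?_
    · rw [← key]
      exact le_of_eq (tsum_congr fun i => by rw [hBf i])
    · intro n hn
      simp only [Function.mem_support, ne_eq] at hn
      by_contra hcon
      have hnot : ¬ ∃ i, f i = n := by simpa [Set.mem_range] using hcon
      apply hn
      rw [hBnot n hnot]
      rw [show EMetric.diam (∅ : Set Y) = 0 from Metric.ediam_empty, zero_pow (by omega : k ≠ 0)]

lemma abs_cell {t h G : ℝ} (hA : G*h ≤ t) (hB : t ≤ (G+1)*h) : |t - (G+1/2)*h| ≤ h/2 := by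
  rw [abs_le]; constructor <;> nlinarith

def gridCtr (Q : DyadicCube d) (N : ℕ) (g : Fin d → Fin (N+1)) : Xd d :=
  WithLp.toLp 2 (fun i => (Q.center i - Q.side/2) + (((g i : ℕ) : ℝ) + 1/2) * (Q.side/(N+1)))

def gridIdx (Q : DyadicCube d) (N : ℕ) (p : Xd d) : Fin d → Fin (N+1) :=
  fun i => ⟨min N ⌊(p i - (Q.center i - Q.side/2))/(Q.side/(N+1))⌋₊,
    Nat.lt_succ_of_le (min_le_left _ _)⟩

lemma cube_cover (hd : 1 ≤ d) (Q : DyadicCube d) {δ : ℝ≥0∞} (hδ : 0 < δ) :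
    ∃ (N : ℕ) (C : (Fin d → Fin (N+1)) → Set (Xd d)),
      (∀ g, ∃ x r, C g = Metric.closedBall x r) ∧
      (∀ g, EMetric.diam (C g) ≤ δ) ∧
      Q.toSet ⊆ ⋃ g, C g ∧
      ∑' g, EMetric.diam (C g) ^ d ≤ ENNReal.ofReal ((2*d*Q.side)^d) := by
  classical
  have hs := side_pos Q
  have hd' : (1:ℝ) ≤ d := by exact_mod_cast hd
  set δ₀ : ℝ := if δ = ⊤ then 1 else δ.toReal with hδ₀def
  have hδ₀ : 0 < δ₀ := by
    rw [hδ₀def]; split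
    · norm_num
    · exact ENNReal.toReal_pos (ne_of_gt hδ) (by assumption)
  have hδ₀le : ENNReal.ofReal δ₀ ≤ δ := by
    rw [hδ₀def]; split
    · rename_i hh; rw [hh]; exact le_top
    · rw [ENNReal.ofReal_toReal (by assumption)]
  obtain ⟨N, hN⟩ := exists_nat_ge (2*d*Q.side/δ₀)
  have hN1 : (0:ℝ) < (N:ℝ)+1 := by positivity
  have hh : 0 < Q.side/(N+1) := by positivity
  have hr : 0 < (d:ℝ) * (Q.side/(N+1)) := by positivity
  have hrδ : 2*((d:ℝ) * (Q.side/(N+1))) ≤ δ₀ := by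
    rw [div_le_iff₀ hδ₀] at hN
    rw [mul_div_assoc', mul_div_assoc', div_le_iff₀ hN1]
    nlinarith [hN, hδ₀]
  set r : ℝ := (d:ℝ) * (Q.side/(N+1)) with hrdef
  have hdiam : ∀ g, EMetric.diam (Metric.closedBall (gridCtr Q N g) r) ≤
      ENNReal.ofReal (2*r) := by
    intro g
    apply EMetric.diam_le
    intro x hx y hy
    rw [edist_dist]
    apply ENNReal.ofReal_le_ofReal
    have hx' := mem_closedBall.1 hx
    have hy' := mem_closedBall.1 hy
    calc dist x y ≤ dist x (gridCtr Q N g) + dist y (gridCtr Q N g) := dist_triangle_right _ _ _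
      _ ≤ 2*r := by linarith
  refine ⟨N, fun g => Metric.closedBall (gridCtr Q N g) r, fun g => ⟨gridCtr Q N g, r, rfl⟩,
    ?_, ?_, ?_⟩
  · intro g
    exact le_trans (hdiam g) (le_trans (ENNReal.ofReal_le_ofReal hrδ) hδ₀le)
  · intro p hp
    refine mem_iUnion.2 ⟨gridIdx Q N p, ?_⟩
    have key : ∀ i, |p i - gridCtr Q N (gridIdx Q N p) i| ≤ (Q.side/(N+1))/2 := by
      intro i
      have hb := coord_bounds Q hp i
      have hcen : Q.center i = ((Q.z i : ℝ) + 1/2) * Q.side := rfl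
      have hlo1 : Q.center i - Q.side/2 = (Q.z i : ℝ) * Q.side := by rw [hcen]; ring
      have ht0 : 0 ≤ p i - (Q.center i - Q.side/2) := by rw [hlo1]; linarith [hb.1]
      have ht1 : p i - (Q.center i - Q.side/2) ≤ ((N:ℝ)+1) * (Q.side/(N+1)) := by
        have hOK : ((N:ℝ)+1) * (Q.side / (N+1)) = Q.side := by field_simp
        rw [hOK, hlo1]
        linarith [hb.2]
      generalize habbr : p i - (Q.center i - Q.side/2) = t at ht0 ht1
      generalize hhabbr : Q.side/(N+1) = h at ht0 ht1 hh ⊢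
      have hgv : ((gridIdx Q N p i : ℕ) : ℝ) * h ≤ t ∧ t ≤ (((gridIdx Q N p i : ℕ) : ℝ) + 1) * h := by
        have hgi : (gridIdx Q N p i : ℕ) = min N ⌊t/h⌋₊ := by
          simp only [gridIdx, habbr, hhabbr]
        by_cases hc : ⌊t/h⌋₊ ≤ N
        · rw [hgi, min_eq_right hc]
          constructor
          · have h1 := Nat.floor_le (by positivity : (0:ℝ) ≤ t/h)
            calc (⌊t/h⌋₊ : ℝ) * h ≤ (t/h) * h := by nlinarith
              _ = t := by field_simp
          · have h2 : t/h < (⌊t/h⌋₊ : ℝ) + 1 := Nat.lt_floor_add_one (t/h)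
            calc t = (t/h)*h := by field_simp
              _ ≤ ((⌊t/h⌋₊ : ℝ) + 1) * h := by nlinarith
        · push_neg at hc
          rw [hgi, min_eq_left (le_of_lt hc)]
          constructor
          · have h1 : ((N:ℝ)+1) ≤ (⌊t/h⌋₊ : ℝ) := by exact_mod_cast hc
            have h2 : (⌊t/h⌋₊ : ℝ) ≤ t/h := Nat.floor_le (by positivity)
            have h4 : ((N:ℝ)+1) ≤ t/h := le_trans h1 h2
            have h5 : ((N:ℝ)+1)*h ≤ (t/h)*h := mul_le_mul_of_nonneg_right h4 (le_of_lt hh)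
            have h6 : (t/h)*h = t := by field_simp
            nlinarith
          · exact ht1
      have hctri : gridCtr Q N (gridIdx Q N p) i =
          (Q.center i - Q.side/2) + (((gridIdx Q N p i : ℕ) : ℝ) + 1/2) * h := by
        simp only [gridCtr, PiLp.toLp_apply, hhabbr]
      have hdiff : p i - gridCtr Q N (gridIdx Q N p) i =
          t - (((gridIdx Q N p i : ℕ) : ℝ) + 1/2) * h := by
        rw [hctri, ← habbr]; ring
      rw [hdiff]
      exact abs_cell hgv.1 hgv.2
    rw [mem_closedBall, EuclideanSpace.dist_eq, hrdef]
    have hsum2 : ∑ i, dist (p i) (gridCtr Q N (gridIdx Q N p) i)^2 ≤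
        (d:ℝ) * ((Q.side/(N+1))/2)^2 := by
      calc ∑ i, dist (p i) (gridCtr Q N (gridIdx Q N p) i)^2
          ≤ ∑ _i : Fin d, ((Q.side/(N+1))/2)^2 := by
            apply Finset.sum_le_sum
            intro i _
            rw [Real.dist_eq]
            exact pow_le_pow_left₀ (abs_nonneg _) (key i) 2
        _ = (d:ℝ) * ((Q.side/(N+1))/2)^2 := by
            rw [Finset.sum_const, Finset.card_univ, Fintype.card_fin, nsmul_eq_mul]
    calc Real.sqrt (∑ i, dist (p i) (gridCtr Q N (gridIdx Q N p) i)^2)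
        ≤ Real.sqrt ((d:ℝ) * ((Q.side/(N+1))/2)^2) := Real.sqrt_le_sqrt hsum2
      _ ≤ Real.sqrt (((d:ℝ)*(Q.side/(N+1)))^2) := Real.sqrt_le_sqrt (by nlinarith)
      _ = (d:ℝ)*(Q.side/(N+1)) := Real.sqrt_sq (by positivity)
  · calc ∑' g, EMetric.diam (Metric.closedBall (gridCtr Q N g) r) ^ d
        ≤ ∑' _g : (Fin d → Fin (N+1)), ENNReal.ofReal (2*r) ^ d := by
          apply Summable.tsum_le_tsum _ ENNReal.summable ENNReal.summable
          intro g
          exact pow_le_pow_left₀ zero_le (hdiam g) d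
      _ = (Fintype.card (Fin d → Fin (N+1))) • (ENNReal.ofReal (2*r) ^ d) := by
          rw [tsum_fintype, Finset.sum_const, Finset.card_univ]
      _ = (((N+1)^d : ℕ) : ℝ≥0∞) * ENNReal.ofReal ((2*r) ^ d) := by
          rw [nsmul_eq_mul, ← ENNReal.ofReal_pow (by positivity)]
          congr 2
          simp [Fintype.card_fun]
      _ = ENNReal.ofReal ((((N+1)^d : ℕ) : ℝ) * (2*r) ^ d) := by
          rw [ENNReal.ofReal_mul (by positivity)]
          congr 1
          exact (ENNReal.ofReal_natCast _).symm
      _ ≤ ENNReal.ofReal ((2*d*Q.side)^d) := by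
          apply ENNReal.ofReal_le_ofReal
          apply le_of_eq
          have hkey : ((N:ℝ)+1) * (2*r) = 2*d*Q.side := by
            rw [hrdef]; field_simp
          calc (((N+1)^d : ℕ) : ℝ) * (2*r)^d = ((N:ℝ)+1)^d * (2*r)^d := by
                push_cast; ring
            _ = (((N:ℝ)+1) * (2*r))^d := (mul_pow _ _ _).symm
            _ = (2*d*Q.side)^d := by rw [hkey]

lemma hMeasure_le_sum (hd : 1 ≤ d) (ℬ : Set (DyadicCube d)) :
    hMeasure d (⋃ Q ∈ ℬ, Q.toSet) ≤
      ∑' Q : ℬ, ENNReal.ofReal ((2*d*(Q : DyadicCube d).side)^d) := by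
  rw [hMeasure]
  apply iSup_le; intro δ
  apply iSup_le; intro hδ
  choose N C hball hdiam hcov hsum using fun Q : ℬ => cube_cover hd (Q : DyadicCube d) hδ
  obtain ⟨B, hBcov, hBshape, hBsum⟩ :=
    exists_nat_cover (ι := (Q : ℬ) × (Fin d → Fin (N Q + 1)))
      (fun pr => C pr.1 pr.2) d hd
  have hcov' : (⋃ Q ∈ ℬ, Q.toSet) ⊆ ⋃ n, B n := by
    intro x hx
    obtain ⟨Q, hQ, hxQ⟩ := mem_iUnion₂.1 hx
    obtain ⟨g, hg⟩ := mem_iUnion.1 (hcov ⟨Q, hQ⟩ hxQ)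
    exact hBcov (mem_iUnion.2 ⟨⟨⟨Q, hQ⟩, g⟩, hg⟩)
  have hprops : ∀ n, (∃ x r, B n = Metric.closedBall x r) ∧ EMetric.diam (B n) ≤ δ := by
    intro n
    rcases hBshape n with h0 | ⟨i, hi⟩
    · constructor
      · refine ⟨0, -1, ?_⟩
        rw [h0, Metric.closedBall_eq_empty.2 (by norm_num)]
      · rw [h0, show EMetric.diam (∅ : Set (Xd d)) = 0 from Metric.ediam_empty]; exact zero_le
    · rw [hi]
      exact ⟨hball i.1 i.2, hdiam i.1 i.2⟩
  calc (⨅ (B : ℕ → Set (Xd d)) (_ : (⋃ Q ∈ ℬ, Q.toSet) ⊆ ⋃ i, B i)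
        (_ : ∀ i, (∃ x r, B i = Metric.closedBall x r) ∧ EMetric.diam (B i) ≤ δ),
        ∑' i, EMetric.diam (B i) ^ d)
      ≤ ∑' n, EMetric.diam (B n) ^ d := by
        exact iInf_le_of_le B (iInf_le_of_le hcov' (iInf_le _ hprops))
    _ ≤ ∑' pr : (Q : ℬ) × (Fin d → Fin (N Q + 1)), EMetric.diam (C pr.1 pr.2) ^ d := hBsum
    _ = ∑' (Q : ℬ), ∑' g, EMetric.diam (C Q g) ^ d :=
        ENNReal.tsum_sigma (fun Q g => EMetric.diam (C Q g) ^ d)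
    _ ≤ ∑' Q : ℬ, ENNReal.ofReal ((2*d*(Q : DyadicCube d).side)^d) := by
        exact Summable.tsum_le_tsum (fun Q => hsum Q) ENNReal.summable ENNReal.summable

end SplitAux
namespace SplitAux

variable {d : ℕ}

lemma volume_oBox (Q : DyadicCube d) : volume (oBox Q) = ENNReal.ofReal (Q.side ^ d) := by
  have hs := side_pos Q
  rw [oBox, volume_openBox _ (by linarith : (0:ℝ) ≤ Q.side/2)]
  congr 1
  rw [show 2*(Q.side/2) = Q.side by ring]

lemma volume_scaled (Q : DyadicCube d) (L : ℕ) :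
    volume (Q.scaled L) = ENNReal.ofReal (((L:ℝ) * Q.side) ^ d) := by
  have hs := side_pos Q
  have hL : (0:ℝ) ≤ L := Nat.cast_nonneg L
  rw [scaled_eq, volume_closedBox _ (by positivity : (0:ℝ) ≤ (L:ℝ)*Q.side/2)]
  congr 1
  rw [show 2*((L:ℝ)*Q.side/2) = (L:ℝ)*Q.side by ring]

lemma measurableSet_scaled (Q : DyadicCube d) (L : ℝ) : MeasurableSet (Q.scaled L) := by
  rw [scaled_eq]; exact measurableSet_closedBox _ _

lemma oBox_subset_interior (Q : DyadicCube d) : oBox Q ⊆ interior Q.toSet :=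
  (IsOpen.subset_interior_iff (isOpen_openBox _ _)).2 (oBox_subset_toSet Q)

lemma bad_volume (hd : 1 ≤ d) (𝒬 : Set (DyadicCube d))
    (hdisj : 𝒬.Pairwise fun Q Q' => interior Q.toSet ∩ interior Q'.toSet = ∅)
    (Λ m : ℕ) (hm : 0 < m)
    (ℬ : Set (DyadicCube d)) (hℬsub : ℬ ⊆ 𝒬)
    (hbad : ∀ Q ∈ ℬ, ∃ F : Fin m → DyadicCube d, Function.Injective F ∧
        ∀ c, F c ∈ 𝒬 ∧ Q.toSet ⊆ (F c).scaled (2*Λ+1 : ℕ)) :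
    ∑' Q : ℬ, ENNReal.ofReal ((Q : DyadicCube d).side ^ d) ≤
      ENNReal.ofReal (((2*Λ+1 : ℕ) : ℝ)^d) / m := by
  classical
  -- pairwise disjointness of open boxes
  have hdisjo : ∀ Q ∈ 𝒬, ∀ Q' ∈ 𝒬, Q ≠ Q' → Disjoint (oBox Q) (oBox Q') := by
    intro Q hQ Q' hQ' hne
    apply Set.disjoint_of_subset (oBox_subset_interior Q) (oBox_subset_interior Q')
    rw [Set.disjoint_iff_inter_eq_empty]
    exact hdisj hQ hQ' hne
  set g : Xd d → ℝ≥0∞ :=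
    fun x => ∑' Q' : 𝒬, Set.indicator ((Q' : DyadicCube d).scaled (2*Λ+1 : ℕ)) 1 x with hgdef
  have hgmeas : Measurable g :=
    Measurable.ennreal_tsum fun Q' => measurable_one.indicator (measurableSet_scaled _ _)
  have hint : ∫⁻ x, g x = ∑' Q' : 𝒬, volume ((Q' : DyadicCube d).scaled (2*Λ+1 : ℕ)) := by
    simp only [hgdef]
    rw [lintegral_tsum fun Q' =>
      (measurable_one.indicator (measurableSet_scaled _ _)).aemeasurable]
    exact tsum_congr fun Q' => lintegral_indicator_one (measurableSet_scaled _ _)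
  -- total mass of open boxes of 𝒬 is at most 1
  have hsum1 : ∑' Q' : 𝒬, ENNReal.ofReal ((Q' : DyadicCube d).side ^ d) ≤ 1 := by
    have hdisj' : Pairwise (Function.onFun Disjoint fun Q' : 𝒬 => oBox (Q' : DyadicCube d)) := by
      intro q q' hne
      exact hdisjo _ q.2 _ q'.2 (fun h => hne (Subtype.ext h))
    calc ∑' Q' : 𝒬, ENNReal.ofReal ((Q' : DyadicCube d).side ^ d)
        = ∑' Q' : 𝒬, volume (oBox (Q' : DyadicCube d)) := by
          exact tsum_congr fun Q' => (volume_oBox _).symm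
      _ = volume (⋃ Q' : 𝒬, oBox (Q' : DyadicCube d)) :=
          (measure_iUnion hdisj' fun Q' => (isOpen_openBox _ _).measurableSet).symm
      _ ≤ volume (closedBox (fun _ => (1:ℝ)/2) (1/2) : Set (Xd d)) := by
          apply measure_mono
          apply iUnion_subset
          intro Q'
          exact subset_trans (oBox_subset_toSet _) (toSet_subset_unit _)
      _ = 1 := by
          rw [volume_closedBox _ (by norm_num : (0:ℝ) ≤ 1/2)]
          norm_num
  have hIle : ∫⁻ x, g x ≤ ENNReal.ofReal (((2*Λ+1 : ℕ) : ℝ)^d) := by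
    rw [hint]
    calc ∑' Q' : 𝒬, volume ((Q' : DyadicCube d).scaled (2*Λ+1 : ℕ))
        = ∑' Q' : 𝒬, ENNReal.ofReal (((2*Λ+1 : ℕ) : ℝ)^d) *
            ENNReal.ofReal ((Q' : DyadicCube d).side ^ d) := by
          apply tsum_congr
          intro Q'
          rw [volume_scaled, mul_pow, ← ENNReal.ofReal_mul (by positivity)]
      _ = ENNReal.ofReal (((2*Λ+1 : ℕ) : ℝ)^d) *
            ∑' Q' : 𝒬, ENNReal.ofReal ((Q' : DyadicCube d).side ^ d) := ENNReal.tsum_mul_left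
      _ ≤ ENNReal.ofReal (((2*Λ+1 : ℕ) : ℝ)^d) * 1 := by
          exact mul_le_mul_right hsum1 _
      _ = _ := mul_one _
  -- Markov
  have hMarkov := mul_meas_ge_le_lintegral₀ (μ := (volume : Measure (Xd d))) hgmeas.aemeasurable (m : ℝ≥0∞)
  -- bad boxes live in the superlevel set
  have hW : (⋃ Q : ℬ, oBox (Q : DyadicCube d)) ⊆ {x | (m : ℝ≥0∞) ≤ g x} := by
    rintro x hx
    obtain ⟨Q, hxQ⟩ := mem_iUnion.1 hx
    obtain ⟨F, hFinj, hF⟩ := hbad Q Q.2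
    have hxT : x ∈ (Q : DyadicCube d).toSet := oBox_subset_toSet _ hxQ
    set T : Finset 𝒬 := Finset.image (fun c => (⟨F c, (hF c).1⟩ : 𝒬)) Finset.univ with hT
    have hTsum : ∑ q ∈ T, Set.indicator ((q : DyadicCube d).scaled (2*Λ+1 : ℕ)) 1 x
        = (m : ℝ≥0∞) := by
      rw [hT, Finset.sum_image (by
        intro c _ c' _ hcc
        exact hFinj (congrArg Subtype.val hcc))]
      have : ∀ c : Fin m,
          Set.indicator ((F c).scaled (2*Λ+1 : ℕ)) (1 : Xd d → ℝ≥0∞) x = 1 := by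
        intro c
        rw [Set.indicator_of_mem ((hF c).2 hxT)]
        rfl
      rw [Finset.sum_congr rfl fun c _ => this c, Finset.sum_const, Finset.card_univ,
        Fintype.card_fin, nsmul_eq_mul, mul_one]
    show (m : ℝ≥0∞) ≤ g x
    rw [← hTsum, hgdef]
    exact ENNReal.sum_le_tsum T
  -- put it together
  have hmne0 : (m : ℝ≥0∞) ≠ 0 := by exact_mod_cast Nat.pos_iff_ne_zero.1 hm
  have hmnetop : (m : ℝ≥0∞) ≠ ⊤ := ENNReal.natCast_ne_top m
  have hdisjB : Pairwise (Function.onFun Disjoint fun Q : ℬ => oBox (Q : DyadicCube d)) := by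
    intro q q' hne
    exact hdisjo _ (hℬsub q.2) _ (hℬsub q'.2) (fun h => hne (Subtype.ext h))
  calc ∑' Q : ℬ, ENNReal.ofReal ((Q : DyadicCube d).side ^ d)
      = volume (⋃ Q : ℬ, oBox (Q : DyadicCube d)) := by
        rw [measure_iUnion hdisjB fun Q => (isOpen_openBox _ _).measurableSet]
        exact tsum_congr fun Q => (volume_oBox _).symm
    _ ≤ volume {x | (m : ℝ≥0∞) ≤ g x} := measure_mono hW
    _ ≤ (∫⁻ x, g x) / m := by
        rw [ENNReal.le_div_iff_mul_le (Or.inl hmne0) (Or.inl hmnetop)]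
        calc volume {x | (m : ℝ≥0∞) ≤ g x} * m = m * volume {x | (m : ℝ≥0∞) ≤ g x} :=
              mul_comm _ _
          _ ≤ ∫⁻ x, g x := hMarkov
    _ ≤ ENNReal.ofReal (((2*Λ+1 : ℕ) : ℝ)^d) / m := ENNReal.div_le_div_right hIle m

end SplitAux

namespace SplitAux

variable {d : ℕ}

lemma encode_inj {m a a' c c' : ℕ} (hc : c < m) (hc' : c' < m)
    (h : a*m + c = a'*m + c') : a = a' ∧ c = c' := by
  have key : ∀ x y u v : ℕ, u < m → x < y → x*m + u < y*m + v := by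
    intro x y u v hu hxy
    calc x*m + u < x*m + m := by omega
      _ = (x+1)*m := by ring
      _ ≤ y*m := Nat.mul_le_mul_right m hxy
      _ ≤ y*m + v := Nat.le_add_right _ _
  have ha : a = a' := by
    rcases Nat.lt_trichotomy a a' with hl | he | hg
    · exact absurd h (Nat.ne_of_lt (key a a' c c' hc hl))
    · exact he
    · exact absurd h.symm (Nat.ne_of_lt (key a' a c' c hc' hg))
  subst ha
  exact ⟨rfl, by omega⟩

def sigmaFun (𝒬 : Set (DyadicCube d)) (Λ m : ℕ)
    (e : (Fin d → Fin (Λ+1)) ≃ Fin ((Λ+1)^d)) (Q : DyadicCube d) :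
    Fin ((Λ+1)^d * m + 1) :=
  (bcolor 𝒬 Λ m Q).elim (Fin.last _) (fun c =>
    ⟨(e (resid Λ Q) : ℕ) * m + (c : ℕ), by
      have h1 : (e (resid Λ Q) : ℕ) + 1 ≤ (Λ+1)^d := (e (resid Λ Q)).isLt
      calc (e (resid Λ Q) : ℕ) * m + (c : ℕ) < (e (resid Λ Q) : ℕ) * m + m := by
            omega
        _ = ((e (resid Λ Q) : ℕ) + 1) * m := by ring
        _ ≤ (Λ+1)^d * m := Nat.mul_le_mul_right m h1
        _ < (Λ+1)^d * m + 1 := Nat.lt_succ_self _⟩)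

lemma sigmaFun_val_none {𝒬 : Set (DyadicCube d)} {Λ m : ℕ}
    {e : (Fin d → Fin (Λ+1)) ≃ Fin ((Λ+1)^d)} {Q : DyadicCube d}
    (h : bcolor 𝒬 Λ m Q = none) :
    (sigmaFun 𝒬 Λ m e Q : ℕ) = (Λ+1)^d * m := by
  simp [sigmaFun, h]

lemma sigmaFun_val_some {𝒬 : Set (DyadicCube d)} {Λ m : ℕ}
    {e : (Fin d → Fin (Λ+1)) ≃ Fin ((Λ+1)^d)} {Q : DyadicCube d} {c : Fin m}
    (h : bcolor 𝒬 Λ m Q = some c) :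
    (sigmaFun 𝒬 Λ m e Q : ℕ) = (e (resid Λ Q) : ℕ) * m + (c : ℕ) := by
  simp [sigmaFun, h]

lemma sigmaFun_lt_of_some {𝒬 : Set (DyadicCube d)} {Λ m : ℕ}
    {e : (Fin d → Fin (Λ+1)) ≃ Fin ((Λ+1)^d)} {Q : DyadicCube d} {c : Fin m}
    (h : bcolor 𝒬 Λ m Q = some c) :
    (sigmaFun 𝒬 Λ m e Q : ℕ) < (Λ+1)^d * m := by
  rw [sigmaFun_val_some h]
  have h1 : (e (resid Λ Q) : ℕ) + 1 ≤ (Λ+1)^d := (e (resid Λ Q)).isLt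
  calc (e (resid Λ Q) : ℕ) * m + (c : ℕ) < (e (resid Λ Q) : ℕ) * m + m := by
        have := c.isLt; omega
    _ = ((e (resid Λ Q) : ℕ) + 1) * m := by ring
    _ ≤ (Λ+1)^d * m := Nat.mul_le_mul_right m h1

end SplitAux

theorem splitting_lemma' (d : ℕ) (hd : 1 ≤ d) (η : ℝ) (hη : 0 < η) (Λ : ℕ) (hΛ : Odd Λ) :
    ∃ k₀ : ℕ,
      ∀ 𝒬 : Set (DyadicCube d),
        (𝒬.Pairwise fun Q Q' => interior Q.toSet ∩ interior Q'.toSet = ∅) →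
        ∃ σ : DyadicCube d → Fin (k₀ + 1),
          (∀ Q ∈ 𝒬, ∀ Q' ∈ 𝒬, Q ≠ Q' → σ Q = σ Q' → (σ Q : ℕ) < k₀ →
            Q.scaled (Λ : ℝ) ∩ Q'.scaled (Λ : ℝ) = ∅) ∧
          hMeasure d (⋃ Q ∈ {Q ∈ 𝒬 | (σ Q : ℕ) = k₀}, Q.toSet) < ENNReal.ofReal η := by
  classical
  open SplitAux in
  set Creal : ℝ := (2*(d:ℝ))^d * (((2*Λ+1 : ℕ)):ℝ)^d with hCdef
  have hC0 : 0 < Creal := by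
    rw [hCdef]
    have hd' : (1:ℝ) ≤ d := by exact_mod_cast hd
    positivity
  set m : ℕ := ⌈Creal / η⌉₊ + 1 with hmdef
  have hm0 : 0 < m := Nat.succ_pos _
  have hcard : Fintype.card (Fin d → Fin (Λ+1)) = (Λ+1)^d := by
    simp [Fintype.card_fun]
  set e : (Fin d → Fin (Λ+1)) ≃ Fin ((Λ+1)^d) := Fintype.equivFinOfCardEq hcard with hedef
  refine ⟨(Λ+1)^d * m, ?_⟩
  intro 𝒬 hdisj
  refine ⟨SplitAux.sigmaFun 𝒬 Λ m e, ?_, ?_⟩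
  · -- separation of families
    intro Q hQ Q' hQ' hne hσ hlt
    obtain ⟨c, hc⟩ : ∃ c, bcolor 𝒬 Λ m Q = some c := by
      cases hb : bcolor 𝒬 Λ m Q with
      | none => rw [sigmaFun_val_none hb] at hlt; omega
      | some c => exact ⟨c, rfl⟩
    obtain ⟨c', hc'⟩ : ∃ c', bcolor 𝒬 Λ m Q' = some c' := by
      cases hb : bcolor 𝒬 Λ m Q' with
      | none =>
        have := sigmaFun_val_none (e := e) hb
        rw [hσ] at hlt
        rw [this] at hlt
        omega
      | some c => exact ⟨c, rfl⟩
    have hval : (e (resid Λ Q) : ℕ) * m + (c : ℕ) = (e (resid Λ Q') : ℕ) * m + (c' : ℕ) := by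
      rw [← sigmaFun_val_some (e := e) hc, ← sigmaFun_val_some (e := e) hc', hσ]
    obtain ⟨hea, hcc⟩ := SplitAux.encode_inj c.isLt c'.isLt hval
    have hresid : resid Λ Q = resid Λ Q' := e.injective (Fin.ext hea)
    have hceq : c' = Fin.mk (c : ℕ) c.isLt := by
      apply Fin.ext; simp [← hcc]
    rw [← Set.not_nonempty_iff_eq_empty]
    intro hnon
    have hconf : SplitAux.Conf Λ Q Q' := hnon
    rcases Nat.lt_trichotomy Q.k Q'.k with hk | hk | hk
    · -- Q bigger? no: Q.k < Q'.k means Q' smaller; Q' avoided Q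
      have hconf' : SplitAux.Conf Λ Q' Q := by
        obtain ⟨p, h1, h2⟩ := hconf; exact ⟨p, h2, h1⟩
      have := SplitAux.bcolor_some hc' Q hQ hk hresid hconf'
      apply this
      rw [hc]
      exact congrArg _ (Fin.ext hcc)
    · exact SplitAux.same_scale_not_conf hk hne
        (fun i => congrArg Fin.val (congrFun hresid i)) hconf
    · have := SplitAux.bcolor_some hc Q' hQ' hk hresid.symm hconf
      apply this
      rw [hc']
      exact congrArg _ (Fin.ext hcc.symm)
  · -- measure of the bad family
    set ℬ : Set (DyadicCube d) := {Q ∈ 𝒬 | (SplitAux.sigmaFun 𝒬 Λ m e Q : ℕ) = (Λ+1)^d * m}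
      with hBdef
    have hℬsub : ℬ ⊆ 𝒬 := fun Q hQ => hQ.1
    have hbadnone : ∀ Q ∈ ℬ, bcolor 𝒬 Λ m Q = none := by
      intro Q hQ
      cases hb : bcolor 𝒬 Λ m Q with
      | none => rfl
      | some c =>
        exfalso
        have h1 := SplitAux.sigmaFun_lt_of_some (e := e) hb
        have h2 := hQ.2
        omega
    have hbad : ∀ Q ∈ ℬ, ∃ F : Fin m → DyadicCube d, Function.Injective F ∧
        ∀ c, F c ∈ 𝒬 ∧ Q.toSet ⊆ (F c).scaled (2*Λ+1 : ℕ) := by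
      intro Q hQ
      have hnone := hbadnone Q hQ
      choose F hF1 hF2 hF3 hF4 hF5 using fun c => SplitAux.bcolor_none hnone c
      refine ⟨F, ?_, ?_⟩
      · intro c c' hcc
        have : some c = some c' := by rw [← hF5 c, ← hF5 c', hcc]
        exact Option.some.inj this
      · intro c
        exact ⟨hF1 c, SplitAux.conf_subset (hF2 c) (hF4 c)⟩
    have hvol := SplitAux.bad_volume hd 𝒬 hdisj Λ m hm0 ℬ hℬsub hbad
    have hmeas := SplitAux.hMeasure_le_sum hd ℬ
    -- combine
    calc hMeasure d (⋃ Q ∈ ℬ, Q.toSet)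
        ≤ ∑' Q : ℬ, ENNReal.ofReal ((2*d*(Q : DyadicCube d).side)^d) := hmeas
      _ = ∑' Q : ℬ, ENNReal.ofReal ((2*(d:ℝ))^d) *
            ENNReal.ofReal ((Q : DyadicCube d).side^d) := by
          apply tsum_congr
          intro Q
          rw [← ENNReal.ofReal_mul (by positivity), ← mul_pow]
      _ = ENNReal.ofReal ((2*(d:ℝ))^d) *
            ∑' Q : ℬ, ENNReal.ofReal ((Q : DyadicCube d).side^d) := ENNReal.tsum_mul_left
      _ ≤ ENNReal.ofReal ((2*(d:ℝ))^d) *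
            (ENNReal.ofReal (((2*Λ+1 : ℕ) : ℝ)^d) / m) := mul_le_mul_right hvol _
      _ = ENNReal.ofReal Creal / m := by
          rw [← mul_div_assoc, ← ENNReal.ofReal_mul (by positivity), hCdef]
      _ < ENNReal.ofReal η := by
          have hmlt : Creal / η < m := by
            have h1 := Nat.le_ceil (Creal / η)
            have h2 : (⌈Creal / η⌉₊ : ℝ) < m := by
              rw [hmdef]; push_cast; linarith
            linarith
          have hkey : Creal / m < η := by
            rw [div_lt_iff₀ (by positivity : (0:ℝ) < (m:ℝ))]
            rw [div_lt_iff₀ hη] at hmlt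
            linarith
          calc ENNReal.ofReal Creal / m
              = ENNReal.ofReal Creal / ENNReal.ofReal (m:ℝ) := by
                rw [ENNReal.ofReal_natCast]
            _ = ENNReal.ofReal (Creal / m) := (ENNReal.ofReal_div_of_pos (by positivity)).symm
            _ < ENNReal.ofReal η := (ENNReal.ofReal_lt_ofReal_iff hη).2 hkey


/-- **Splitting lemma.**  Let `𝒬` be a collection of dyadic cubes in `[0,1]^d` with pairwise
disjoint interiors, `η > 0`, and `Λ` an odd natural number.  Then `𝒬` can be partitioned into
families `𝒬_1, …, 𝒬_{k₀}` and `ℬ` (encoded by an assignment `σ` into `Fin (k₀+1)`, the last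
value marking `ℬ`) such that distinct cubes in the same family `𝒬_j` have `ΛQ ∩ ΛQ' = ∅`, and
the `H^d`-measure of the union of the cubes of `ℬ` is `< η`.  The number `k₀` depends only on
`η`, `Λ`, `d`. -/
theorem splitting_lemma (d : ℕ) (hd : 1 ≤ d) (η : ℝ) (hη : 0 < η) (Λ : ℕ) (hΛ : Odd Λ) :
    ∃ k₀ : ℕ,
      ∀ 𝒬 : Set (DyadicCube d),
        (𝒬.Pairwise fun Q Q' => interior Q.toSet ∩ interior Q'.toSet = ∅) →
        ∃ σ : DyadicCube d → Fin (k₀ + 1),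
          (∀ Q ∈ 𝒬, ∀ Q' ∈ 𝒬, Q ≠ Q' → σ Q = σ Q' → (σ Q : ℕ) < k₀ →
            Q.scaled (Λ : ℝ) ∩ Q'.scaled (Λ : ℝ) = ∅) ∧
          hMeasure d (⋃ Q ∈ {Q ∈ 𝒬 | (σ Q : ℕ) = k₀}, Q.toSet) < ENNReal.ofReal η :=
  splitting_lemma' d hd η hη Λ hΛ

end
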